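/- If Φ : S^d_+ → S^{d'}_+ is a strictly positive linear map, then the function X ↦ log det(Φ(X)) on S^d_{++} is geodesically convex with respect to the affine-invariant metric; concretely, for all positive definite X, Y: log det(Φ(X # Y)) ≤ (1/2) log det(Φ(X)) + (1/2) log det(Φ(Y)), where X # Y is the matrix geometric mean. -/

import Mathlib

open Matrix

/-- Real power of a matrix via the spectral decomposition (defined for Hermitian input). -/
noncomputable def mpow {d : ℕ} (A : Matrix (Fin d) (Fin d) ℝ) (t : ℝ) : Matrix (Fin d) (Fin d) ℝ :=
  if hA : A.IsHermitian then
    (hA.eigenvectorUnitary : Matrix (Fin d) (Fin d) ℝ) *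
      Matrix.diagonal (fun i => hA.eigenvalues i ^ t) *
      star (hA.eigenvectorUnitary : Matrix (Fin d) (Fin d) ℝ)
  else A

/-- The geodesic `X #ₜ Y = X^{1/2} (X^{-1/2} Y X^{-1/2})^t X^{1/2}`. -/
noncomputable def geo {d : ℕ} (X Y : Matrix (Fin d) (Fin d) ℝ) (t : ℝ) : Matrix (Fin d) (Fin d) ℝ :=
  mpow X (1/2) * mpow (mpow X (-(1/2)) * Y * mpow X (-(1/2))) t * mpow X (1/2)

/-- The matrix geometric mean `X # Y`. -/
noncomputable def gmean {d : ℕ} (X Y : Matrix (Fin d) (Fin d) ℝ) : Matrix (Fin d) (Fin d) ℝ :=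
  geo X Y (1/2)


variable {n : ℕ}

lemma dot_smul_mat (c : ℝ) (M : Matrix (Fin n) (Fin n) ℝ) (x y : Fin n → ℝ) :
    x ⬝ᵥ (c • M) *ᵥ y = c * (x ⬝ᵥ M *ᵥ y) := by
  rw [Matrix.smul_mulVec, dotProduct_smul, smul_eq_mul]

lemma dot_sum_mat {ι : Type*} (s : Finset ι) (F : ι → Matrix (Fin n) (Fin n) ℝ)
    (x y : Fin n → ℝ) :
    x ⬝ᵥ (∑ i ∈ s, F i) *ᵥ y = ∑ i ∈ s, x ⬝ᵥ (F i) *ᵥ y := by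
  classical
  induction s using Finset.induction with
  | empty => simp
  | insert _ _ h ih =>
      rw [Finset.sum_insert h, Finset.sum_insert h, Matrix.add_mulVec, dotProduct_add, ih]

lemma dot_symm {P : Matrix (Fin n) (Fin n) ℝ} (hP : P.IsHermitian) (x y : Fin n → ℝ) :
    x ⬝ᵥ P *ᵥ y = y ⬝ᵥ P *ᵥ x := by
  have hPt : Pᵀ = P := by
    have := hP.eq
    rwa [show Pᴴ = Pᵀ by ext i j; simp [Matrix.conjTranspose_apply]] at this
  rw [dotProduct_mulVec, ← Matrix.mulVec_transpose, hPt, dotProduct_comm]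

lemma psd_vecMulVec (v : Fin n → ℝ) : (Matrix.vecMulVec v v).PosSemidef := by
  apply Matrix.PosSemidef.of_dotProduct_mulVec_nonneg
  · ext i j; simp [Matrix.conjTranspose_apply, Matrix.vecMulVec_apply, mul_comm]
  · intro x
    have : Matrix.vecMulVec v v *ᵥ x = (v ⬝ᵥ x) • v := by
      ext i
      simp only [Matrix.mulVec, Matrix.vecMulVec_apply, dotProduct, Pi.smul_apply, smul_eq_mul,
        Finset.sum_mul, Finset.mul_sum]
      exact Finset.sum_congr rfl fun j _ => by ring
    rw [this]
    simp only [star_trivial, dotProduct_smul, smul_eq_mul]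
    have : v ⬝ᵥ x = x ⬝ᵥ v := dotProduct_comm v x
    rw [this]
    exact mul_self_nonneg _

lemma decomp_diag (V : Matrix (Fin n) (Fin n) ℝ) (f : Fin n → ℝ) :
    V * Matrix.diagonal f * Vᴴ
      = ∑ i, f i • Matrix.vecMulVec (fun j => V j i) (fun j => V j i) := by
  ext j k
  rw [Matrix.sum_apply]
  rw [Matrix.mul_apply]
  simp only [Matrix.mul_diagonal, Matrix.conjTranspose_apply, star_trivial,
    Matrix.smul_apply, Matrix.vecMulVec_apply, smul_eq_mul]
  exact Finset.sum_congr rfl fun i _ => by ring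


lemma det_one_add_psd {Q : Matrix (Fin n) (Fin n) ℝ} (hQ : Q.PosSemidef) :
    1 ≤ (1 + Q).det := by
  set U := (hQ.1.eigenvectorUnitary : Matrix (Fin n) (Fin n) ℝ) with hU
  have h1 : U * star U = 1 := (Matrix.mem_unitaryGroup_iff).mp hQ.1.eigenvectorUnitary.2
  have hQd : Q = U * Matrix.diagonal hQ.1.eigenvalues * star U := by
    have := hQ.1.spectral_theorem; simpa using this
  have h2 : star U * U = 1 := (Matrix.mem_unitaryGroup_iff').mp hQ.1.eigenvectorUnitary.2
  have key : 1 + Q = U * (1 + Matrix.diagonal hQ.1.eigenvalues) * star U := by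
    rw [mul_add, add_mul, mul_one, h1]
    exact congrArg (1 + ·) hQd
  rw [key]
  have hdet : (U * (1 + Matrix.diagonal hQ.1.eigenvalues) * star U).det
      = (1 + Matrix.diagonal hQ.1.eigenvalues).det := by
    rw [Matrix.det_mul, Matrix.det_mul, mul_comm, ← mul_assoc, ← Matrix.det_mul, h2,
      Matrix.det_one, one_mul]
  rw [hdet]
  have : (1 : Matrix (Fin n) (Fin n) ℝ) + Matrix.diagonal hQ.1.eigenvalues
      = Matrix.diagonal (fun i => 1 + hQ.1.eigenvalues i) := by
    rw [← Matrix.diagonal_one, Matrix.diagonal_add]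
  rw [this, Matrix.det_diagonal]
  calc (1:ℝ) = ∏ _i : Fin n, 1 := by simp
    _ ≤ ∏ i, (1 + hQ.1.eigenvalues i) := by
        apply Finset.prod_le_prod
        · intro i _; norm_num
        · intro i _; linarith [hQ.eigenvalues_nonneg i]

open scoped MatrixOrder in
lemma det_mono {M N : Matrix (Fin n) (Fin n) ℝ} (hM : M.PosDef) (hMN : (N - M).PosSemidef) :
    M.det ≤ N.det := by
  set R := CFC.sqrt M with hRdef
  have hR : R.PosSemidef := Matrix.nonneg_iff_posSemidef.mp (CFC.sqrt_nonneg M)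
  have hRR : R * R = M := CFC.sqrt_mul_sqrt_self M hM.posSemidef.nonneg
  have hdetR : R.det * R.det = M.det := by rw [← Matrix.det_mul, hRR]
  have hRdet : IsUnit R.det := by
    have : R.det ≠ 0 := by
      intro h; rw [h, mul_zero] at hdetR; exact (hM.det_pos.ne' hdetR.symm).elim
      
    exact this.isUnit
  have hRinv : R * R⁻¹ = 1 := Matrix.mul_nonsing_inv R hRdet
  have hRinv' : R⁻¹ * R = 1 := Matrix.nonsing_inv_mul R hRdet
  have hRH : R⁻¹ᴴ = R⁻¹ := by
    rw [Matrix.conjTranspose_nonsing_inv, hR.1.eq]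
  set Q := R⁻¹ * (N - M) * R⁻¹ with hQdef
  have hQ : Q.PosSemidef := by
    have := hMN.conjTranspose_mul_mul_same R⁻¹
    rwa [hRH] at this
  have hN : N = R * (1 + Q) * R := by
    rw [hQdef, mul_add, add_mul, mul_one]
    rw [show R * (R⁻¹ * (N - M) * R⁻¹) * R = (R * R⁻¹) * (N - M) * (R⁻¹ * R) by
      simp only [mul_assoc], hRinv, hRinv', one_mul, mul_one, hRR]
    abel
  rw [hN, Matrix.det_mul, Matrix.det_mul, mul_comm, ← mul_assoc, ← Matrix.det_mul, hRR]
  nlinarith [det_one_add_psd hQ, hM.det_pos]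

lemma posDef_conj {n : ℕ} {A : Matrix (Fin n) (Fin n) ℝ} (hA : A.PosDef)
    (B : Matrix (Fin n) (Fin n) ℝ) (hB : IsUnit B.det) : (B * A * Bᴴ).PosDef := by
  refine Matrix.PosDef.of_dotProduct_mulVec_pos (isHermitian_mul_mul_conjTranspose B hA.1) fun x hx => ?_
  have hBH : Function.Injective (Bᴴ.mulVec) := by
    apply Matrix.mulVec_injective_iff_isUnit.2
    rw [Matrix.isUnit_iff_isUnit_det, Matrix.det_conjTranspose]
    exact hB.star
  have hx' : Bᴴ *ᵥ x ≠ 0 := fun h => hx (hBH (by simpa using h))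
  simpa only [star_mulVec, dotProduct_mulVec, vecMul_vecMul, conjTranspose_conjTranspose]
    using hA.dotProduct_mulVec_pos hx'

lemma smul_one_posDef {ε : ℝ} (hε : 0 < ε) : (ε • (1 : Matrix (Fin n) (Fin n) ℝ)).PosDef := by
  have : ε • (1 : Matrix (Fin n) (Fin n) ℝ) = Matrix.diagonal fun _ => ε := by
    ext i j
    by_cases h : i = j <;> simp [Matrix.one_apply, Matrix.diagonal_apply, h]
  rw [this]
  exact Matrix.posDef_diagonal_iff.mpr fun _ => hε

lemma phi_psd {d d' : ℕ}
    (Φ : Matrix (Fin d) (Fin d) ℝ →ₗ[ℝ] Matrix (Fin d') (Fin d') ℝ)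
    (hΦ : ∀ X : Matrix (Fin d) (Fin d) ℝ, X.PosDef → (Φ X).PosDef)
    {M : Matrix (Fin d) (Fin d) ℝ} (hM : M.PosSemidef) : (Φ M).PosSemidef := by
  have h1 : (Φ (M + 1)).PosDef := hΦ _ (Matrix.PosDef.posSemidef_add hM Matrix.PosDef.one)
  have hone : (Φ 1).PosDef := hΦ _ Matrix.PosDef.one
  apply Matrix.PosSemidef.of_dotProduct_mulVec_nonneg
  · have : Φ M = Φ (M + 1) - Φ 1 := by rw [map_add]; abel
    rw [this]
    exact h1.1.sub hone.1
  · intro x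
    rcases eq_or_ne x 0 with rfl | hx
    · simp
    · by_contra hcon
      push_neg at hcon
      set q := star x ⬝ᵥ (Φ M) *ᵥ x with hq
      set c := star x ⬝ᵥ (Φ 1) *ᵥ x with hc
      have hcpos : 0 < c := hone.dotProduct_mulVec_pos hx
      set ε : ℝ := -q / c with hε
      have hεpos : 0 < ε := div_pos (by linarith) hcpos
      have hMe : (M + ε • 1).PosDef := Matrix.PosDef.posSemidef_add hM (smul_one_posDef hεpos)
      have := (hΦ _ hMe).dotProduct_mulVec_pos hx
      rw [map_add, LinearMap.map_smul, Matrix.add_mulVec, dotProduct_add, Matrix.smul_mulVec,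
        dotProduct_smul, smul_eq_mul, ← hq, ← hc] at this
      rw [hε] at this
      rw [div_mul_cancel₀ _ hcpos.ne'] at this
      linarith

lemma core {d d' : ℕ}
    (Φ : Matrix (Fin d) (Fin d) ℝ →ₗ[ℝ] Matrix (Fin d') (Fin d') ℝ)
    (hΦ : ∀ X : Matrix (Fin d) (Fin d) ℝ, X.PosDef → (Φ X).PosDef)
    (V : Matrix (Fin d) (Fin d) ℝ) (μ : Fin d → ℝ) (hμ : ∀ i, 0 < μ i)
    {X Y G : Matrix (Fin d) (Fin d) ℝ}
    (hXd : X = V * Matrix.diagonal μ * Vᴴ)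
    (hYd : Y = V * Matrix.diagonal (fun i => (μ i)⁻¹) * Vᴴ)
    (hGd : G = V * Vᴴ)
    (hA : (Φ X).PosDef) (hB : (Φ Y).PosDef) (hC : (Φ G).PosDef) :
    (Φ G).det ^ 2 ≤ (Φ X).det * (Φ Y).det := by
  classical
  set A := Φ X with hAdef
  set B := Φ Y with hBdef
  set C := Φ G with hCdef
  set P : Fin d → Matrix (Fin d') (Fin d') ℝ :=
    fun i => Φ (Matrix.vecMulVec (fun j => V j i) (fun j => V j i)) with hP
  have hPpsd : ∀ i, (P i).PosSemidef := fun i => phi_psd Φ hΦ (psd_vecMulVec _)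
  -- decompositions
  have hXs : A = ∑ i, μ i • P i := by
    rw [hAdef, hXd, decomp_diag, map_sum]
    exact Finset.sum_congr rfl fun i _ => by rw [LinearMap.map_smul]
  have hYs : B = ∑ i, (μ i)⁻¹ • P i := by
    rw [hBdef, hYd, decomp_diag, map_sum]
    exact Finset.sum_congr rfl fun i _ => by rw [LinearMap.map_smul]
  have hGs : C = ∑ i, P i := by
    have : V * Vᴴ = V * Matrix.diagonal (fun _ : Fin d => (1:ℝ)) * Vᴴ := by
      rw [Matrix.diagonal_one, mul_one]
    rw [hCdef, hGd, this, decomp_diag, map_sum]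
    exact Finset.sum_congr rfl fun i _ => by rw [LinearMap.map_smul, one_smul]
  -- key quadratic inequality
  have key : ∀ x y : Fin d' → ℝ,
      0 ≤ x ⬝ᵥ A *ᵥ x + 2 * (x ⬝ᵥ C *ᵥ y) + y ⬝ᵥ B *ᵥ y := by
    intro x y
    have e1 : x ⬝ᵥ A *ᵥ x = ∑ i, μ i * (x ⬝ᵥ P i *ᵥ x) := by
      rw [hXs, dot_sum_mat]
      exact Finset.sum_congr rfl fun i _ => dot_smul_mat _ _ _ _
    have e2 : x ⬝ᵥ C *ᵥ y = ∑ i, x ⬝ᵥ P i *ᵥ y := by rw [hGs, dot_sum_mat]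
    have e3 : y ⬝ᵥ B *ᵥ y = ∑ i, (μ i)⁻¹ * (y ⬝ᵥ P i *ᵥ y) := by
      rw [hYs, dot_sum_mat]
      exact Finset.sum_congr rfl fun i _ => dot_smul_mat _ _ _ _
    rw [e1, e2, e3, Finset.mul_sum, ← Finset.sum_add_distrib, ← Finset.sum_add_distrib]
    apply Finset.sum_nonneg
    intro i _
    set a : ℝ := Real.sqrt (μ i) with ha
    have hapos : 0 < a := Real.sqrt_pos.mpr (hμ i)
    have haa : a * a = μ i := Real.mul_self_sqrt (hμ i).le
    set z : Fin d' → ℝ := a • x + a⁻¹ • y with hz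
    have hnn : 0 ≤ z ⬝ᵥ P i *ᵥ z := by
      have := (hPpsd i).dotProduct_mulVec_nonneg z
      simpa using this
    have hexp : z ⬝ᵥ P i *ᵥ z
        = (a*a) * (x ⬝ᵥ P i *ᵥ x) + (a*a⁻¹) * (x ⬝ᵥ P i *ᵥ y)
          + (a⁻¹*a) * (y ⬝ᵥ P i *ᵥ x) + (a⁻¹*a⁻¹) * (y ⬝ᵥ P i *ᵥ y) := by
      rw [hz]
      simp only [Matrix.mulVec_add, Matrix.mulVec_smul, dotProduct_add, add_dotProduct,
        dotProduct_smul, smul_dotProduct, smul_eq_mul]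
      ring
    have hsym : y ⬝ᵥ P i *ᵥ x = x ⬝ᵥ P i *ᵥ y := dot_symm (hPpsd i).1 y x
    have hainv : a * a⁻¹ = 1 := mul_inv_cancel₀ hapos.ne'
    have hAinv2 : a⁻¹ * a⁻¹ = (μ i)⁻¹ := by
      rw [← mul_inv]; rw [haa]
    rw [hsym, hainv, inv_mul_cancel₀ hapos.ne', haa, hAinv2] at hexp
    calc (0:ℝ) ≤ z ⬝ᵥ P i *ᵥ z := hnn
      _ = μ i * (x ⬝ᵥ P i *ᵥ x) + 2 * (x ⬝ᵥ P i *ᵥ y) + (μ i)⁻¹ * (y ⬝ᵥ P i *ᵥ y) := by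
          rw [hexp]; ring
  -- Schur complement step
  have hBinvH : B⁻¹.IsHermitian := hB.1.inv
  have hBB : B * B⁻¹ = 1 := Matrix.mul_nonsing_inv B hB.det_pos.ne'.isUnit
  have hSchur : (A - C * B⁻¹ * C).PosSemidef := by
    apply Matrix.PosSemidef.of_dotProduct_mulVec_nonneg
    · have : (C * B⁻¹ * C).IsHermitian := by
        have h1 : (C * B⁻¹ * Cᴴ).IsHermitian :=
          Matrix.isHermitian_mul_mul_conjTranspose C hBinvH
        rwa [hC.1.eq] at h1
      exact hA.1.sub this
    · intro x
      have hk := key x (-(B⁻¹ *ᵥ (C *ᵥ x)))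
      set u := C *ᵥ x with hu
      have h1 : x ⬝ᵥ C *ᵥ (-(B⁻¹ *ᵥ u)) = -(u ⬝ᵥ (B⁻¹ *ᵥ u)) := by
        rw [Matrix.mulVec_neg, dotProduct_neg, dot_symm hC.1, ← hu, dotProduct_comm]
      have h2 : (-(B⁻¹ *ᵥ u)) ⬝ᵥ B *ᵥ (-(B⁻¹ *ᵥ u)) = u ⬝ᵥ (B⁻¹ *ᵥ u) := by
        have hBu : B *ᵥ (B⁻¹ *ᵥ u) = u := by
          rw [Matrix.mulVec_mulVec, hBB, Matrix.one_mulVec]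
        rw [Matrix.mulVec_neg, dotProduct_neg, neg_dotProduct, neg_neg, hBu, dotProduct_comm]
      rw [h1, h2] at hk
      have h3 : x ⬝ᵥ (A - C * B⁻¹ * C) *ᵥ x = x ⬝ᵥ A *ᵥ x - u ⬝ᵥ (B⁻¹ *ᵥ u) := by
        rw [Matrix.sub_mulVec, dotProduct_sub]
        congr 1
        rw [← Matrix.mulVec_mulVec, ← Matrix.mulVec_mulVec, ← hu, dot_symm hC.1]
        exact dotProduct_comm _ _
      simp only [star_trivial]
      rw [h3]
      linarith
  -- determinant chain
  have hCBC : (C * B⁻¹ * C).PosDef := by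
    have := posDef_conj hB.inv C hC.det_pos.ne'.isUnit
    rwa [hC.1.eq] at this
  have hdet1 : (C * B⁻¹ * C).det ≤ A.det := det_mono hCBC (by
    have : A - C * B⁻¹ * C = A - C * B⁻¹ * C := rfl
    exact hSchur)
  have hdet2 : (C * B⁻¹ * C).det = C.det ^ 2 * B.det⁻¹ := by
    rw [Matrix.det_mul, Matrix.det_mul, Matrix.det_nonsing_inv]
    have : Ring.inverse B.det = B.det⁻¹ := Ring.inverse_eq_inv _
    rw [this]; ring
  have hBdetpos := hB.det_pos
  have := hdet1
  rw [hdet2] at this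
  calc C.det ^ 2 = (C.det ^ 2 * B.det⁻¹) * B.det := by
        field_simp
    _ ≤ A.det * B.det := by
        apply mul_le_mul_of_nonneg_right this hBdetpos.le

section Main

variable {d : ℕ} {A : Matrix (Fin d) (Fin d) ℝ}

lemma unitary_isUnit_det (hA : A.IsHermitian) :
    IsUnit ((hA.eigenvectorUnitary : Matrix (Fin d) (Fin d) ℝ)).det :=
  IsUnit.of_mul_eq_one _ <| by
    rw [← Matrix.det_mul]
    rw [(Matrix.mem_unitaryGroup_iff).mp hA.eigenvectorUnitary.2, Matrix.det_one]

lemma mpow_eq (hA : A.IsHermitian) (t : ℝ) :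
    mpow A t = (hA.eigenvectorUnitary : Matrix (Fin d) (Fin d) ℝ) *
      Matrix.diagonal (fun i => hA.eigenvalues i ^ t) *
      star (hA.eigenvectorUnitary : Matrix (Fin d) (Fin d) ℝ) := by
  rw [mpow, dif_pos hA]

lemma mpow_posDef (hA : A.PosDef) (t : ℝ) : (mpow A t).PosDef := by
  rw [mpow_eq hA.1 t]
  have hD : (Matrix.diagonal (fun i => hA.1.eigenvalues i ^ t)).PosDef :=
    Matrix.posDef_diagonal_iff.mpr fun i => Real.rpow_pos_of_pos (hA.eigenvalues_pos i) t
  simpa [Matrix.star_eq_conjTranspose] using posDef_conj hD _ (unitary_isUnit_det hA.1)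

lemma mpow_mul_mpow (hA : A.PosDef) (s t : ℝ) : mpow A s * mpow A t = mpow A (s + t) := by
  rw [mpow_eq hA.1 s, mpow_eq hA.1 t, mpow_eq hA.1 (s+t)]
  set U := (hA.1.eigenvectorUnitary : Matrix (Fin d) (Fin d) ℝ) with hU
  have h1 : star U * U = 1 := (Matrix.mem_unitaryGroup_iff').mp hA.1.eigenvectorUnitary.2
  calc U * Matrix.diagonal (fun i => hA.1.eigenvalues i ^ s) * star U *
        (U * Matrix.diagonal (fun i => hA.1.eigenvalues i ^ t) * star U)
      = U * (Matrix.diagonal (fun i => hA.1.eigenvalues i ^ s) * ((star U * U) *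
          Matrix.diagonal (fun i => hA.1.eigenvalues i ^ t))) * star U := by
        simp only [mul_assoc]
    _ = U * Matrix.diagonal (fun i => hA.1.eigenvalues i ^ (s + t)) * star U := by
        rw [h1, one_mul, diagonal_mul_diagonal]
        have : (fun i => hA.1.eigenvalues i ^ s * hA.1.eigenvalues i ^ t)
            = fun i => hA.1.eigenvalues i ^ (s + t) := by
          funext i; exact (Real.rpow_add (hA.eigenvalues_pos i) s t).symm
        rw [this]

lemma mpow_zero (hA : A.IsHermitian) : mpow A 0 = 1 := by
  rw [mpow_eq hA 0]
  simp only [Real.rpow_zero, diagonal_one]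
  rw [mul_one]
  exact (Matrix.mem_unitaryGroup_iff).mp hA.eigenvectorUnitary.2

lemma mpow_one (hA : A.IsHermitian) : mpow A 1 = A := by
  rw [mpow_eq hA 1]
  simp only [Real.rpow_one]
  have := hA.spectral_theorem
  simpa using this.symm

end Main

theorem stmt6 {d d' : ℕ}
    (Φ : Matrix (Fin d) (Fin d) ℝ →ₗ[ℝ] Matrix (Fin d') (Fin d') ℝ)
    (hΦ : ∀ X : Matrix (Fin d) (Fin d) ℝ, X.PosDef → (Φ X).PosDef)
    (X Y : Matrix (Fin d) (Fin d) ℝ) (hX : X.PosDef) (hY : Y.PosDef) :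
    Real.log (Φ (gmean X Y)).det ≤
      (1/2) * Real.log (Φ X).det + (1/2) * Real.log (Φ Y).det := by
  classical
  set Xh := mpow X (1/2) with hXh
  set Xm := mpow X (-(1/2)) with hXm
  have hXhPD : Xh.PosDef := mpow_posDef hX _
  have hXmPD : Xm.PosDef := mpow_posDef hX _
  have hXhXh : Xh * Xh = X := by
    rw [hXh, mpow_mul_mpow hX]; norm_num [mpow_one hX.1]
  have hXmXh : Xm * Xh = 1 := by
    rw [hXm, hXh, mpow_mul_mpow hX]; norm_num [mpow_zero hX.1]
  have hXhXm : Xh * Xm = 1 := by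
    rw [hXm, hXh, mpow_mul_mpow hX]; norm_num [mpow_zero hX.1]
  -- the middle matrix
  set M := Xm * Y * Xm with hMdef
  have hMPD : M.PosDef := by
    have := posDef_conj hY Xm hXmPD.det_pos.ne'.isUnit
    rwa [hXmPD.1.eq] at this
  set Mh := mpow M (1/2) with hMh
  have hMhPD : Mh.PosDef := mpow_posDef hMPD _
  have hMhMh : Mh * Mh = M := by
    rw [hMh, mpow_mul_mpow hMPD]; norm_num [mpow_one hMPD.1]
  set G := gmean X Y with hGdef
  have hGeq : G = Xh * Mh * Xh := rfl
  have hGPD : G.PosDef := by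
    rw [hGeq]
    have := posDef_conj hMhPD Xh hXhPD.det_pos.ne'.isUnit
    rwa [hXhPD.1.eq] at this
  have hXinv : X⁻¹ = Xm * Xm := by
    apply Matrix.inv_eq_right_inv
    calc X * (Xm * Xm) = Xh * (Xh * Xm) * Xm := by rw [← hXhXh]; simp only [mul_assoc]
      _ = 1 := by rw [hXhXm, mul_one, hXhXm]
  have hRic : G * X⁻¹ * G = Y := by
    rw [hGeq, hXinv]
    calc Xh * Mh * Xh * (Xm * Xm) * (Xh * Mh * Xh)
        = Xh * Mh * (Xh * Xm) * (Xm * Xh) * Mh * Xh := by simp only [mul_assoc]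
      _ = Xh * (Mh * Mh) * Xh := by rw [hXhXm, hXmXh, mul_one, mul_one]; simp only [mul_assoc]
      _ = Xh * (Xm * Y * Xm) * Xh := by rw [hMhMh, hMdef]
      _ = (Xh * Xm) * Y * (Xm * Xh) := by simp only [mul_assoc]
      _ = Y := by rw [hXhXm, hXmXh, one_mul, mul_one]
  -- square root of G
  set Gh := mpow G (1/2) with hGh
  set Gm := mpow G (-(1/2)) with hGm
  have hGhPD : Gh.PosDef := mpow_posDef hGPD _
  have hGmPD : Gm.PosDef := mpow_posDef hGPD _
  have hGhGh : Gh * Gh = G := by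
    rw [hGh, mpow_mul_mpow hGPD]; norm_num [mpow_one hGPD.1]
  have hGmGh : Gm * Gh = 1 := by
    rw [hGm, hGh, mpow_mul_mpow hGPD]; norm_num [mpow_zero hGPD.1]
  have hGhGm : Gh * Gm = 1 := by
    rw [hGm, hGh, mpow_mul_mpow hGPD]; norm_num [mpow_zero hGPD.1]
  set S := Gm * X * Gm with hSdef
  have hSPD : S.PosDef := by
    have := posDef_conj hX Gm hGmPD.det_pos.ne'.isUnit
    rwa [hGmPD.1.eq] at this
  set T := Gh * X⁻¹ * Gh with hTdef
  have hXdec : X = Gh * S * Gh := by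
    rw [hSdef]
    calc X = (Gh * Gm) * X * (Gm * Gh) := by rw [hGhGm, hGmGh, one_mul, mul_one]
      _ = Gh * (Gm * X * Gm) * Gh := by simp only [mul_assoc]
  have hYdec : Y = Gh * T * Gh := by
    rw [hTdef, ← hRic, ← hGhGh]
    simp only [mul_assoc]
  have hST : S * T = 1 := by
    rw [hSdef, hTdef]
    calc Gm * X * Gm * (Gh * X⁻¹ * Gh)
        = Gm * (X * ((Gm * Gh) * X⁻¹)) * Gh := by simp only [mul_assoc]
      _ = Gm * (X * X⁻¹) * Gh := by rw [hGmGh, one_mul]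
      _ = Gm * Gh := by rw [Matrix.mul_nonsing_inv X hX.det_pos.ne'.isUnit, mul_one]
      _ = 1 := hGmGh
  -- spectral decomposition of S
  set U := (hSPD.1.eigenvectorUnitary : Matrix (Fin d) (Fin d) ℝ) with hU
  set μ := hSPD.1.eigenvalues with hμdef
  have hμ : ∀ i, 0 < μ i := fun i => hSPD.eigenvalues_pos i
  have hUU : U * star U = 1 := (Matrix.mem_unitaryGroup_iff).mp hSPD.1.eigenvectorUnitary.2
  have hUU' : star U * U = 1 := (Matrix.mem_unitaryGroup_iff').mp hSPD.1.eigenvectorUnitary.2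
  have hSd : S = U * Matrix.diagonal μ * star U := by
    have := hSPD.1.spectral_theorem
    simpa using this
  have hTd : T = U * Matrix.diagonal (fun i => (μ i)⁻¹) * star U := by
    have hST' : S * (U * Matrix.diagonal (fun i => (μ i)⁻¹) * star U) = 1 := by
      rw [hSd]
      calc U * Matrix.diagonal μ * star U * (U * Matrix.diagonal (fun i => (μ i)⁻¹) * star U)
          = U * (Matrix.diagonal μ * ((star U * U) * Matrix.diagonal (fun i => (μ i)⁻¹)))
            * star U := by simp only [mul_assoc]
        _ = U * (Matrix.diagonal μ * Matrix.diagonal (fun i => (μ i)⁻¹)) * star U := by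
            rw [hUU', one_mul]
        _ = U * star U := by
            rw [diagonal_mul_diagonal]
            have : (fun i => μ i * (μ i)⁻¹) = fun _ : Fin d => (1:ℝ) := by
              funext i; exact mul_inv_cancel₀ (hμ i).ne'
            rw [this, diagonal_one, mul_one]
        _ = 1 := hUU
    have h1 : S⁻¹ = T := Matrix.inv_eq_right_inv hST
    have h2 : S⁻¹ = U * Matrix.diagonal (fun i => (μ i)⁻¹) * star U :=
      Matrix.inv_eq_right_inv hST'
    rw [← h1, h2]
  set V := Gh * U with hV
  have hVH : Vᴴ = star U * Gh := by
    rw [hV, conjTranspose_mul, ← Matrix.star_eq_conjTranspose, hGhPD.1.eq]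
  have hXd : X = V * Matrix.diagonal μ * Vᴴ := by
    rw [hVH, hV, hXdec, hSd]; simp only [mul_assoc]
  have hYd : Y = V * Matrix.diagonal (fun i => (μ i)⁻¹) * Vᴴ := by
    rw [hVH, hV, hYdec, hTd]; simp only [mul_assoc]
  have hGd : G = V * Vᴴ := by
    rw [hVH, hV, ← hGhGh]
    calc Gh * Gh = Gh * (U * star U) * Gh := by rw [hUU, mul_one]
      _ = Gh * U * (star U * Gh) := by simp only [mul_assoc]
  -- apply the core inequality
  have hkey : (Φ G).det ^ 2 ≤ (Φ X).det * (Φ Y).det :=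
    core Φ hΦ V μ hμ hXd hYd hGd (hΦ X hX) (hΦ Y hY) (hΦ G hGPD)
  have ha : 0 < (Φ G).det := (hΦ G hGPD).det_pos
  have hb : 0 < (Φ X).det := (hΦ X hX).det_pos
  have hc : 0 < (Φ Y).det := (hΦ Y hY).det_pos
  have hlog : Real.log ((Φ G).det ^ 2) ≤ Real.log ((Φ X).det * (Φ Y).det) :=
    Real.log_le_log (by positivity) hkey
  rw [Real.log_pow, Real.log_mul hb.ne' hc.ne'] at hlog
  push_cast at hlog
  linarith
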